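/- arXiv:2302.12770 — 2 statements merged into one kernel-verified Lean document; each statement's English description precedes it below -/
import Mathlib

section
/- For b > b̄ (with b̄ defined as in Proposition 2), Λ(b) := -(β - b) + (b/(c+2b))(β/2 - b) > 0, and hence the TSO's objective term λ_b·Λ(b)·E[q̂²] is minimized over signalling policies by any signal independent of q, which yields E[q̂²] = (E[q])². -/
open MeasureTheory ProbabilityTheory

lemma memℒp_condexp_two {Ω : Type*} {m m0 : MeasurableSpace Ω} {μ : Measure Ω}
    [IsProbabilityMeasure μ] (hm : m ≤ m0)
    {q : Ω → ℝ} (hq : MemLp q 2 μ) : MemLp (μ[q|m]) 2 μ := by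
  have hqi : Integrable q μ := hq.integrable one_le_two
  set g : Ω → ℝ := ((condExpL2 ℝ ℝ hm (hq.toLp q) : Lp ℝ 2 μ) : Ω → ℝ) with hgdef
  have hg : MemLp g 2 μ := Lp.memLp _
  have hae : g =ᵐ[μ] μ[q|m] := by
    refine ae_eq_condExp_of_forall_setIntegral_eq hm hqi
      (fun s _ _ => (hg.integrable one_le_two).integrableOn)
      (fun s hs hμs => ?_) (aestronglyMeasurable_condExpL2 hm _)
    rw [hgdef]
    rw [integral_condExpL2_eq hm (hq.toLp q) hs hμs.ne]
    exact setIntegral_congr_ae (hm s hs) (hq.coeFn_toLp.mono fun x hx _ => hx)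
  exact hg.ae_eq hae

/-- For `b > b̄`, `Λ(b) = -(β - b) + (b/(c+2b))(β/2 - b) > 0`; hence the TSO objective
term `λ_b Λ(b) E[q̂²]` is minimized, over signals `q̃`, by any signal independent of `q`,
in which case `E[q̂²] = (E[q])²`, the minimal possible value. -/
theorem no_information_optimal_when_overpriced
    (b c β : ℝ) (hb : 0 < b) (hc : 0 < c) (hβ : 0 < β)
    (hbb : (1/2) * ((3/2) * β - c)
        + Real.sqrt ((1/4) * ((3/2) * β - c) ^ 2 + β * c) < b)
    {Ω : Type*} [MeasurableSpace Ω] {μ : Measure Ω} [IsProbabilityMeasure μ]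
    (q : Ω → ℝ) (hq : MemLp q 2 μ) (hqm : Measurable q) :
    0 < -(β - b) + (b / (c + 2 * b)) * (β / 2 - b) ∧
    (∀ (E : Type) [MeasurableSpace E] (qtilde : Ω → E), Measurable qtilde →
      (b / (c + 2 * b)) * (-(β - b) + (b / (c + 2 * b)) * (β / 2 - b)) *
          (∫ ω, q ω ∂μ) ^ 2 ≤
        (b / (c + 2 * b)) * (-(β - b) + (b / (c + 2 * b)) * (β / 2 - b)) *
          ∫ ω, ((μ[q | MeasurableSpace.comap qtilde inferInstance]) ω) ^ 2 ∂μ) ∧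
    (∀ (E : Type) [MeasurableSpace E] (qtilde : Ω → E), Measurable qtilde →
      IndepFun qtilde q μ →
        (∫ ω, ((μ[q | MeasurableSpace.comap qtilde inferInstance]) ω) ^ 2 ∂μ) =
          (∫ ω, q ω ∂μ) ^ 2) := by
  have hd : 0 < c + 2 * b := by linarith
  have hΛ : 0 < -(β - b) + (b / (c + 2 * b)) * (β / 2 - b) := by
    set s := Real.sqrt ((1/4) * ((3/2) * β - c) ^ 2 + β * c) with hs
    have hs0 : 0 ≤ s := Real.sqrt_nonneg _
    have hs2 : s ^ 2 = (1/4) * ((3/2) * β - c) ^ 2 + β * c :=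
      Real.sq_sqrt (by positivity)
    have hquad : 0 < b ^ 2 + b * (c - (3/2) * β) - c * β := by nlinarith
    have heq : -(β - b) + (b / (c + 2 * b)) * (β / 2 - b)
        = (b ^ 2 + b * (c - (3/2) * β) - c * β) / (c + 2 * b) := by
      field_simp; ring
    rw [heq]
    positivity
  refine ⟨hΛ, fun E _ qtilde hqt => ?_, fun E _ qtilde hqt hind => ?_⟩
  · have hm : MeasurableSpace.comap qtilde inferInstance ≤ _ := hqt.comap_le
    have hf2 : MemLp (μ[q | MeasurableSpace.comap qtilde inferInstance]) 2 μ :=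
      memℒp_condexp_two hm hq
    have h1 : (∫ ω, q ω ∂μ) = ∫ ω, (μ[q | MeasurableSpace.comap qtilde inferInstance]) ω ∂μ :=
      (integral_condExp hm).symm
    have hvar := variance_nonneg (μ[q | MeasurableSpace.comap qtilde inferInstance]) μ
    rw [variance_eq_sub hf2] at hvar
    simp only [Pi.pow_apply] at hvar
    have key : (∫ ω, q ω ∂μ) ^ 2
        ≤ ∫ ω, ((μ[q | MeasurableSpace.comap qtilde inferInstance]) ω) ^ 2 ∂μ := by
      rw [h1]; linarith
    exact mul_le_mul_of_nonneg_left key (mul_nonneg (by positivity) hΛ.le)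
  · have hm : MeasurableSpace.comap qtilde inferInstance ≤ _ := hqt.comap_le
    have hqmm : Measurable[MeasurableSpace.comap q inferInstance] q :=
      measurable_iff_comap_le.mpr le_rfl
    have hcc : μ[q | MeasurableSpace.comap qtilde inferInstance]
        =ᵐ[μ] fun _ => ∫ ω, q ω ∂μ :=
      condExp_indep_eq hqm.comap_le hqt.comap_le hqmm.stronglyMeasurable
        (hind.symm : Indep _ _ μ)
    calc ∫ ω, ((μ[q | MeasurableSpace.comap qtilde inferInstance]) ω) ^ 2 ∂μ
        = ∫ _ω, (∫ ω, q ω ∂μ) ^ 2 ∂μ :=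
          integral_congr_ae (hcc.mono fun ω h => by simp only [h])
      _ = (∫ ω, q ω ∂μ) ^ 2 := by simp
end

section
/- With f, f̂ as above, both strictly increasing and continuous on (β/2, ∞), negative at β/2 and tending to +∞, each has a unique zero b*₁ and b*ₙ respectively, and b*₁ ≤ b*ₙ. That is, the truth-telling threshold for n heterogeneous consumers with costs (cᵢ) is at least the threshold for one representative consumer with cost c̄ = (1/n)Σcᵢ. -/
open Finset Filter


lemma amhm' {ι : Type*} (s : Finset ι) (x : ι → ℝ) (hx : ∀ i ∈ s, 0 < x i) :
    (s.card : ℝ)^2 ≤ (∑ i ∈ s, x i) * ∑ i ∈ s, (x i)⁻¹ := by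
  have h := Finset.sum_sq_le_sum_mul_sum_of_sq_eq_mul s (r := fun _ => (1:ℝ)) (f := x)
    (g := fun i => (x i)⁻¹) (fun i hi => (hx i hi).le) (fun i hi => inv_nonneg.2 (hx i hi).le)
    (fun i hi => by rw [one_pow, mul_inv_cancel₀ (hx i hi).ne'])
  simpa using h

set_option maxHeartbeats 1000000

/-- Single-consumer criterion `f(b) = λ_b(β/2 - b) + b - β`, `λ_b = b/(c̄ + 2b)`. -/
noncomputable def fSingle (β cbar b : ℝ) : ℝ :=
  (b / (cbar + 2 * b)) * (β / 2 - b) + b - β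

/-- Multi-consumer criterion `f̂(b) = λ̂_b(β/2 - b) + b - β`, `λ̂_b = ĉ/(1 + ĉ)`,
`ĉ = (1/n)Σᵢ b/(b + cᵢ)`. -/
noncomputable def fMulti (n : ℕ) (β : ℝ) (c : Fin n → ℝ) (b : ℝ) : ℝ :=
  (((1 / (n : ℝ)) * ∑ i, b / (b + c i)) / (1 + (1 / (n : ℝ)) * ∑ i, b / (b + c i)))
      * (β / 2 - b) + b - β

/-- Both `f` and `f̂` are strictly increasing and continuous on `(β/2, ∞)`, negative at
`β/2` and tending to `+∞`; each has a unique zero there, and the zero `b*₁` of `f` is at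
most the zero `b*ₙ` of `f̂`: a population of `n` heterogeneous consumers is less
vulnerable to misinformation than a single representative consumer with cost `c̄`. -/
theorem threshold_single_le_multi (n : ℕ) (hn : 1 ≤ n) (β : ℝ) (hβ : 0 < β)
    (c : Fin n → ℝ) (hc : ∀ i, 0 < c i) :
    StrictMonoOn (fSingle β ((1 / (n : ℝ)) * ∑ i, c i)) (Set.Ioi (β / 2)) ∧
    StrictMonoOn (fMulti n β c) (Set.Ioi (β / 2)) ∧
    ContinuousOn (fSingle β ((1 / (n : ℝ)) * ∑ i, c i)) (Set.Ioi (β / 2)) ∧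
    ContinuousOn (fMulti n β c) (Set.Ioi (β / 2)) ∧
    fSingle β ((1 / (n : ℝ)) * ∑ i, c i) (β / 2) < 0 ∧
    fMulti n β c (β / 2) < 0 ∧
    Tendsto (fSingle β ((1 / (n : ℝ)) * ∑ i, c i)) atTop atTop ∧
    Tendsto (fMulti n β c) atTop atTop ∧
    (∃! b : ℝ, b ∈ Set.Ioi (β / 2) ∧ fSingle β ((1 / (n : ℝ)) * ∑ i, c i) b = 0) ∧
    (∃! b : ℝ, b ∈ Set.Ioi (β / 2) ∧ fMulti n β c b = 0) ∧
    (∀ b₁ bₙ : ℝ, b₁ ∈ Set.Ioi (β / 2) → fSingle β ((1 / (n : ℝ)) * ∑ i, c i) b₁ = 0 →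
      bₙ ∈ Set.Ioi (β / 2) → fMulti n β c bₙ = 0 → b₁ ≤ bₙ) := by
  have hn0 : (0:ℝ) < n := Nat.cast_pos.2 (by omega)
  haveI : Nonempty (Fin n) := ⟨⟨0, by omega⟩⟩
  set k : ℝ := (1 / (n : ℝ)) * ∑ i, c i with hkdef
  have hk : 0 < k := by
    apply mul_pos (by positivity)
    exact Finset.sum_pos (fun i _ => hc i) Finset.univ_nonempty
  set S : ℝ → ℝ := fun b => (1 / (n : ℝ)) * ∑ i, b / (b + c i) with hSdef
  have hfM : ∀ x, fMulti n β c x = (S x / (1 + S x)) * (β / 2 - x) + x - β := fun x => rfl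
  have hbc : ∀ (b : ℝ), 0 ≤ b → ∀ i, 0 < b + c i := fun b hb i => by linarith [hc i]
  have hS0 : ∀ b, 0 ≤ b → 0 ≤ S b := by
    intro b hb
    apply mul_nonneg (by positivity)
    exact Finset.sum_nonneg fun i _ => div_nonneg hb (hbc b hb i).le
  have hS1 : ∀ b, 0 ≤ b → S b ≤ 1 := by
    intro b hb
    have h1 : ∑ i, b / (b + c i) ≤ ∑ _i : Fin n, (1:ℝ) :=
      Finset.sum_le_sum fun i _ => div_le_one_of_le₀ (by linarith [hc i]) (hbc b hb i).le
    simp only [Finset.sum_const, Finset.card_univ, Fintype.card_fin, nsmul_eq_mul,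
      mul_one] at h1
    rw [hSdef]
    calc (1 / (n:ℝ)) * ∑ i, b / (b + c i) ≤ (1 / (n:ℝ)) * n :=
          mul_le_mul_of_nonneg_left h1 (by positivity)
      _ = 1 := by field_simp
  have hdS : ∀ b, 0 ≤ b → 0 < 1 + S b := fun b hb => by linarith [hS0 b hb]
  have hSmono : ∀ a b : ℝ, 0 < a → a < b → S a < S b := by
    intro a b ha hab
    apply mul_lt_mul_of_pos_left _ (by positivity : (0:ℝ) < 1 / (n:ℝ))
    apply Finset.sum_lt_sum_of_nonempty Finset.univ_nonempty
    intro i _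
    rw [div_lt_div_iff₀ (hbc a ha.le i) (hbc b (by linarith) i)]
    nlinarith [hc i]
  have hSkey : ∀ a b : ℝ, 0 < a → a ≤ b → a * S b ≤ b * S a := by
    intro a b ha hab
    have hb : 0 < b := lt_of_lt_of_le ha hab
    have hterm : ∀ i : Fin n, a * (b / (b + c i)) ≤ b * (a / (a + c i)) := by
      intro i
      rw [mul_div_assoc', mul_div_assoc', mul_comm b a]
      apply div_le_div_of_nonneg_left (by positivity) (hbc a ha.le i)
      linarith
    have hsum := Finset.sum_le_sum fun i (_ : i ∈ Finset.univ) => hterm i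
    rw [← Finset.mul_sum, ← Finset.mul_sum] at hsum
    calc a * S b = (1 / (n:ℝ)) * (a * ∑ i, b / (b + c i)) := by rw [hSdef]; ring
      _ ≤ (1 / (n:ℝ)) * (b * ∑ i, a / (a + c i)) :=
          mul_le_mul_of_nonneg_left hsum (by positivity)
      _ = b * S a := by rw [hSdef]; ring
  -- Jensen / AM-HM: b/(b+k) ≤ S b for b > 0
  have hJ : ∀ b : ℝ, 0 < b → b / (b + k) ≤ S b := by
    intro b hb
    have hA := amhm' Finset.univ (fun i => b + c i) (fun i _ => hbc b hb.le i)
    simp only [Finset.card_univ, Fintype.card_fin] at hA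
    have hsum : ∑ i : Fin n, (b + c i) = n * b + ∑ i, c i := by
      rw [Finset.sum_add_distrib, Finset.sum_const, Finset.card_univ, Fintype.card_fin,
        nsmul_eq_mul]
    rw [hsum] at hA
    have hSb : S b = (1 / (n:ℝ)) * (b * ∑ i : Fin n, (b + c i)⁻¹) := by
      rw [hSdef]; simp_rw [div_eq_mul_inv, ← Finset.mul_sum]
    have hI0 : (0:ℝ) ≤ ∑ i : Fin n, (b + c i)⁻¹ :=
      Finset.sum_nonneg fun i _ => (inv_nonneg.2 (hbc b hb.le i).le)
    rw [hSb, hkdef]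
    rw [div_le_iff₀ (by positivity)]
    have h2 := mul_le_mul_of_nonneg_left hA hb.le
    have hne : (n:ℝ) ≠ 0 := hn0.ne'
    have expand : 1 / (n:ℝ) * (b * ∑ i : Fin n, (b + c i)⁻¹) * (b + 1 / (n:ℝ) * ∑ i, c i)
        = (b * (((n:ℝ) * b + ∑ i, c i) * ∑ i : Fin n, (b + c i)⁻¹)) / (n:ℝ)^2 := by
      field_simp
    rw [expand, le_div_iff₀ (by positivity)]
    nlinarith [h2]
  -- comparison of the two lambdas: b/(k+2b) ≤ S b/(1+S b) for b > 0
  have hlam : ∀ b : ℝ, 0 < b → b / (k + 2 * b) ≤ S b / (1 + S b) := by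
    intro b hb
    have h1 := hJ b hb
    rw [div_le_iff₀ (by positivity)] at h1
    rw [div_le_div_iff₀ (by positivity) (hdS b hb.le)]
    nlinarith [h1]
  -- pointwise comparison fMulti ≤ fSingle on b > β/2 ≥ 0
  have hcomp : ∀ b : ℝ, β / 2 < b → fMulti n β c b ≤ fSingle β k b := by
    intro b hb
    have hb0 : 0 < b := lt_trans (by positivity) hb
    rw [hfM]
    unfold fSingle
    have := mul_le_mul_of_nonpos_right (hlam b hb0) (by linarith : β / 2 - b ≤ 0)
    linarith
  -- strict monotonicity of fSingle
  have hmono1 : StrictMonoOn (fSingle β k) (Set.Ioi (β / 2)) := by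
    intro a ha b hb hab
    simp only [Set.mem_Ioi] at ha hb
    have ha0 : 0 < a := lt_trans (by positivity) ha
    have hb0 : 0 < b := lt_trans (by positivity) hb
    have hda : 0 < k + 2 * a := by linarith
    have hdb : 0 < k + 2 * b := by linarith
    have e : ∀ x : ℝ, 0 < k + 2 * x →
        fSingle β k x = (x * (β / 2 - x) + (x - β) * (k + 2 * x)) / (k + 2 * x) := by
      intro x hx
      unfold fSingle
      rw [div_mul_eq_mul_div, div_add' _ _ _ hx.ne', div_sub' hx.ne']
      congr 1; ring
    rw [e a hda, e b hdb, div_lt_div_iff₀ hda hdb]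
    have key : 0 < (b - a) * (k * (a + b + k + β / 2) + 2 * a * b) := by
      apply mul_pos (by linarith)
      have : 0 < a + b + k + β / 2 := by linarith
      nlinarith
    nlinarith [key]
  -- strict monotonicity of fMulti
  have hmono2 : StrictMonoOn (fMulti n β c) (Set.Ioi (β / 2)) := by
    intro a ha b hb hab
    simp only [Set.mem_Ioi] at ha hb
    have ha0 : 0 < a := lt_trans (by positivity) ha
    have hb0 : 0 < b := lt_trans (by positivity) hb
    have hda := hdS a ha0.le
    have hdb := hdS b hb0.le
    have e : ∀ x : ℝ, 0 < 1 + S x →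
        fMulti n β c x = (x - β - S x * (β / 2)) / (1 + S x) := by
      intro x hx
      rw [hfM]
      field_simp
      ring
    rw [e a hda, e b hdb, div_lt_div_iff₀ hda hdb]
    have h1 := hSkey a b ha0 hab.le
    have h2 := hSmono a b ha0 hab
    nlinarith [h1, h2]
  -- continuity on Ici (β/2)
  have hcont1 : ContinuousOn (fSingle β k) (Set.Ici (β / 2)) := by
    unfold fSingle
    apply ContinuousOn.sub _ continuousOn_const
    apply ContinuousOn.add _ continuousOn_id
    apply ContinuousOn.mul _ (continuousOn_const.sub continuousOn_id)
    apply ContinuousOn.div continuousOn_id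
      (continuousOn_const.add (continuousOn_const.mul continuousOn_id))
    intro b hb
    simp only [Set.mem_Ici] at hb
    have : 0 < b := lt_of_lt_of_le (by positivity) hb
    intro h
    simp only [Pi.add_apply, Pi.mul_apply, id_eq] at h
    nlinarith
  have hScont : ContinuousOn S (Set.Ici (β / 2)) := by
    rw [hSdef]
    apply ContinuousOn.mul continuousOn_const
    apply continuousOn_finset_sum
    intro i _
    apply ContinuousOn.div continuousOn_id (continuousOn_id.add continuousOn_const)
    intro b hb
    simp only [Set.mem_Ici] at hb
    have hb0 : 0 ≤ b := le_trans (by positivity) hb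
    exact (hbc b hb0 i).ne'
  have hcont2 : ContinuousOn (fMulti n β c) (Set.Ici (β / 2)) := by
    have : fMulti n β c = fun x => (S x / (1 + S x)) * (β / 2 - x) + x - β := funext hfM
    rw [this]
    apply ContinuousOn.sub _ continuousOn_const
    apply ContinuousOn.add _ continuousOn_id
    apply ContinuousOn.mul _ (continuousOn_const.sub continuousOn_id)
    apply ContinuousOn.div hScont (continuousOn_const.add hScont)
    intro b hb
    simp only [Set.mem_Ici] at hb
    exact (hdS b (le_trans (by positivity) hb)).ne'
  -- negativity at β/2
  have hneg1 : fSingle β k (β / 2) < 0 := by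
    unfold fSingle
    simp only [sub_self, mul_zero, zero_add]
    linarith
  have hneg2 : fMulti n β c (β / 2) < 0 := by
    rw [hfM]
    simp only [sub_self, mul_zero, zero_add]
    linarith
  -- tendsto atTop
  have hlow : Tendsto (fun b : ℝ => b / 2 - 3 * β / 4) atTop atTop := by
    apply tendsto_atTop_add_const_right
    exact Tendsto.atTop_div_const (by norm_num) tendsto_id
  have hT1 : Tendsto (fSingle β k) atTop atTop := by
    apply tendsto_atTop_mono' atTop _ hlow
    filter_upwards [eventually_ge_atTop (β / 2)] with b hb
    have hb0 : 0 < b := lt_of_lt_of_le (by positivity) hb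
    have hl2 : b / (k + 2 * b) ≤ 1 / 2 := by
      rw [div_le_iff₀ (by linarith)]
      linarith
    have := mul_le_mul_of_nonpos_right hl2 (by linarith : β / 2 - b ≤ 0)
    unfold fSingle
    simp only [sub_eq_add_neg]
    nlinarith
  have hT2 : Tendsto (fMulti n β c) atTop atTop := by
    apply tendsto_atTop_mono' atTop _ hlow
    filter_upwards [eventually_ge_atTop (β / 2)] with b hb
    have hb0 : 0 < b := lt_of_lt_of_le (by positivity) hb
    have hl2 : S b / (1 + S b) ≤ 1 / 2 := by
      rw [div_le_iff₀ (hdS b hb0.le)]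
      linarith [hS1 b hb0.le]
    have := mul_le_mul_of_nonpos_right hl2 (by linarith : β / 2 - b ≤ 0)
    rw [hfM]
    linarith
  -- unique zeros
  have hzero : ∀ f : ℝ → ℝ, StrictMonoOn f (Set.Ioi (β / 2)) →
      ContinuousOn f (Set.Ici (β / 2)) → f (β / 2) < 0 → Tendsto f atTop atTop →
      ∃! b : ℝ, b ∈ Set.Ioi (β / 2) ∧ f b = 0 := by
    intro f hm hcont hneg hT
    obtain ⟨B, hB0, hBgt⟩ := ((hT.eventually_gt_atTop 0).and (eventually_gt_atTop (β / 2))).exists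
    obtain ⟨x, hx, hfx⟩ :=
      intermediate_value_Ioo hBgt.le (hcont.mono (Set.Icc_subset_Ici_self)) ⟨hneg, hB0⟩
    exact ⟨x, ⟨hx.1, hfx⟩, fun y hy => hm.injOn hy.1 hx.1 (by rw [hy.2, hfx])⟩
  refine ⟨hmono1, hmono2, hcont1.mono Set.Ioi_subset_Ici_self,
    hcont2.mono Set.Ioi_subset_Ici_self, hneg1, hneg2, hT1, hT2,
    hzero _ hmono1 hcont1 hneg1 hT1, hzero _ hmono2 hcont2 hneg2 hT2, ?_⟩
  intro b₁ bn hb₁ hf₁ hbn hfn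
  by_contra hlt
  push_neg at hlt
  have h1 : fMulti n β c bn < fMulti n β c b₁ := hmono2 hbn hb₁ hlt
  have h2 : fMulti n β c b₁ ≤ 0 := by
    rw [← hf₁]; exact hcomp b₁ hb₁
  rw [hfn] at h1
  linarith
end
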